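/- The fan graph F₅ is not an SPN graph; that is, there exists a copositive 5×5 real symmetric matrix A with G(A) = F₅ that is not SPN. Here F₅ is the graph on vertex set {1,2,3,4,5} whose edges are {1,2}, {2,4}, {4,5}, {1,3}, {2,3}, {3,4}, {3,5} (a path 1−2−4−5 of length 3 together with the vertex 3 adjacent to all four path vertices). -/

import Mathlib

open Matrix

/-- A real symmetric matrix `A` is *copositive* if `xᵀAx ≥ 0` for every
entrywise nonnegative vector `x`. -/
def Copositive {ι : Type*} [Fintype ι] (A : Matrix ι ι ℝ) : Prop :=
  ∀ x : ι → ℝ, (∀ i, 0 ≤ x i) → 0 ≤ x ⬝ᵥ A.mulVec x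

/-- A real symmetric matrix is *SPN* if it is the sum of a positive semidefinite
matrix and a symmetric entrywise nonnegative matrix. -/
def IsSPN {ι : Type*} [Fintype ι] (A : Matrix ι ι ℝ) : Prop :=
  ∃ P N : Matrix ι ι ℝ, P.PosSemidef ∧ N.IsSymm ∧ (∀ i j, 0 ≤ N i j) ∧ A = P + N

/-- The graph `G(A)` of a symmetric real matrix: `i ≠ j` are adjacent iff `A i j ≠ 0`. -/
def matrixGraph {ι : Type*} (A : Matrix ι ι ℝ) : SimpleGraph ι where
  Adj i j := i ≠ j ∧ (A i j ≠ 0 ∨ A j i ≠ 0)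
  symm := by
    refine ⟨?_⟩
    intro i j h
    exact ⟨h.1.symm, h.2.symm⟩
  loopless := by
    refine ⟨?_⟩
    intro i h
    exact h.1 rfl

/-- A graph `G` is an *SPN graph* if every copositive symmetric real matrix whose graph
is isomorphic to `G` is SPN. -/
def IsSPNGraph {V : Type*} [Fintype V] (G : SimpleGraph V) : Prop :=
  ∀ (n : ℕ) (A : Matrix (Fin n) (Fin n) ℝ), A.IsSymm → Copositive A →
    Nonempty (matrixGraph A ≃g G) → IsSPN A

/-- The fan graph `F₅` (vertices `0,…,4` standing for `1,…,5`): the path `1-2-4-5`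
together with vertex `3` joined to all four path vertices. -/
def fanF5 : SimpleGraph (Fin 5) :=
  SimpleGraph.fromEdgeSet
    {s(0, 1), s(1, 3), s(3, 4), s(0, 2), s(1, 2), s(2, 3), s(2, 4)}

noncomputable def Amat : Matrix (Fin 5) (Fin 5) ℝ :=
  !![1,-1,1,0,0; -1,1,-1,1,0; 1,-1,1,-1,1; 0,1,-1,1,-1; 0,0,1,-1,1]

lemma Amat_qform (x : Fin 5 → ℝ) : x ⬝ᵥ Amat.mulVec x =
    x 0^2 + x 1^2 + x 2^2 + x 3^2 + x 4^2
    - 2*x 0*x 1 + 2*x 0*x 2 - 2*x 1*x 2 + 2*x 1*x 3 - 2*x 2*x 3 + 2*x 2*x 4 - 2*x 3*x 4 := by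
  simp [Amat, Matrix.mulVec, dotProduct, Fin.sum_univ_five, Matrix.vecHead, Matrix.vecTail]
  ring

lemma Amat_symm : Amat.IsSymm := by
  show Amatᵀ = Amat
  ext i j
  fin_cases i <;> fin_cases j <;> simp [Amat, Matrix.vecHead, Matrix.vecTail]

lemma Amat_copositive : Copositive Amat := by
  intro x hx
  rw [Amat_qform]
  rcases le_total (x 3) (x 4) with h | h
  · nlinarith [sq_nonneg (x 0 - x 1 + x 2), sq_nonneg (x 3 - x 4),
      mul_nonneg (hx 1) (hx 3), mul_nonneg (hx 2) (sub_nonneg.mpr h)]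
  · nlinarith [sq_nonneg (x 0 - x 1 + x 2 - x 3 + x 4),
      mul_nonneg (hx 1) (hx 4), mul_nonneg (hx 0) (sub_nonneg.mpr h)]

lemma Amat_graph : matrixGraph Amat = fanF5 := by
  ext i j
  fin_cases i <;> fin_cases j <;>
    simp [matrixGraph, fanF5, Amat, SimpleGraph.fromEdgeSet_adj, Set.mem_insert_iff,
      Sym2.eq_iff, Matrix.vecHead, Matrix.vecTail]

set_option maxHeartbeats 2000000 in
lemma Amat_not_SPN : ¬ IsSPN Amat := by
  rintro ⟨P, N, hP, -, hN, hA⟩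
  set v1 : Fin 5 → ℝ := ![71,78,0,0,30] with hv1
  set v2 : Fin 5 → ℝ := ![0,2283,2911,0,-1170] with hv2
  set v3 : Fin 5 → ℝ := ![0,0,54157,93603,47970] with hv3
  set v4 : Fin 5 → ℝ := ![0,0,0,74684,48451] with hv4
  set v5 : Fin 5 → ℝ := ![0,0,0,0,1] with hv5
  have key : ∀ v : Fin 5 → ℝ,
      v ⬝ᵥ Amat.mulVec v = v ⬝ᵥ P.mulVec v + v ⬝ᵥ N.mulVec v := by
    intro v
    rw [hA, Matrix.add_mulVec, dotProduct_add]
  have hPv : ∀ v : Fin 5 → ℝ, 0 ≤ v ⬝ᵥ P.mulVec v := by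
    intro v
    simpa using hP.dotProduct_mulVec_nonneg v
  have hNsum : 0 ≤ (1/7100) * (v1 ⬝ᵥ N.mulVec v1) + (1/8104650) * (v2 ⬝ᵥ N.mulVec v2)
      + (1/6182021550) * (v3 ⬝ᵥ N.mulVec v3) + (3/202233069400) * (v4 ⬝ᵥ N.mulVec v4)
      + (27203/3734200) * (v5 ⬝ᵥ N.mulVec v5) := by
    simp [hv1, hv2, hv3, hv4, hv5, Matrix.mulVec, dotProduct, Fin.sum_univ_five,
      Matrix.vecHead, Matrix.vecTail]
    have h00 := hN 0 0; have h01 := hN 0 1; have h02 := hN 0 2; have h03 := hN 0 3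
    have h04 := hN 0 4; have h10 := hN 1 0; have h11 := hN 1 1; have h12 := hN 1 2
    have h13 := hN 1 3; have h14 := hN 1 4; have h20 := hN 2 0; have h21 := hN 2 1
    have h22 := hN 2 2; have h23 := hN 2 3; have h24 := hN 2 4; have h30 := hN 3 0
    have h31 := hN 3 1; have h32 := hN 3 2; have h33 := hN 3 3; have h34 := hN 3 4
    have h40 := hN 4 0; have h41 := hN 4 1; have h42 := hN 4 2; have h43 := hN 4 3
    have h44 := hN 4 4
    linarith [h00, h01, h02, h03, h04, h10, h11, h12, h13, h14, h20, h21, h22, h23, h24,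
      h30, h31, h32, h33, h34, h40, h41, h42, h43, h44]
  have hAval : (1/7100) * (v1 ⬝ᵥ Amat.mulVec v1) + (1/8104650) * (v2 ⬝ᵥ Amat.mulVec v2)
      + (1/6182021550) * (v3 ⬝ᵥ Amat.mulVec v3) + (3/202233069400) * (v4 ⬝ᵥ Amat.mulVec v4)
      + (27203/3734200) * (v5 ⬝ᵥ Amat.mulVec v5) = -23/50 := by
    rw [Amat_qform v1, Amat_qform v2, Amat_qform v3, Amat_qform v4, Amat_qform v5]
    simp [hv1, hv2, hv3, hv4, hv5, Matrix.vecHead, Matrix.vecTail]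
    norm_num
  rw [key v1, key v2, key v3, key v4, key v5] at hAval
  have p1 := hPv v1; have p2 := hPv v2; have p3 := hPv v3; have p4 := hPv v4; have p5 := hPv v5
  linarith

/-- The fan graph `F₅` is not an SPN graph; that is, there exists a
copositive symmetric `5 × 5` real matrix `A` with `G(A) = F₅` that is not SPN. -/
theorem fanF5_not_isSPNGraph :
    ¬ IsSPNGraph fanF5 ∧
    ∃ A : Matrix (Fin 5) (Fin 5) ℝ,
      A.IsSymm ∧ Copositive A ∧ matrixGraph A = fanF5 ∧ ¬ IsSPN A := by
  have hiso : Nonempty (matrixGraph Amat ≃g fanF5) := by rw [Amat_graph]; exact ⟨SimpleGraph.Iso.refl⟩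
  exact ⟨fun h => Amat_not_SPN (h 5 Amat Amat_symm Amat_copositive hiso),
    ⟨Amat, Amat_symm, Amat_copositive, Amat_graph, Amat_not_SPN⟩⟩
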